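/- Let G be a compact topological group, let H be a nonzero complex Hilbert space, and let π be a strongly continuous unitary representation of G on H (each π(g) is a unitary operator, π(gh) = π(g)π(h), π(e) = id, and g ↦ π(g)v is continuous for each v ∈ H). If π is irreducible, i.e. the only closed subspaces S ⊆ H with π(g)S ⊆ S for all g ∈ G are {0} and H, then H is finite-dimensional. -/

import Mathlib

open MeasureTheory Filter Topology Set
open scoped InnerProductSpace ComplexConjugate

/-- Auxiliary: a compact, symmetric, positive operator on a complex Hilbert space which is
positive somewhere has a positive eigenvalue with a unit eigenvector. -/
lemma aux_exists_unit_eigenvector {H : Type*} [NormedAddCommGroup H] [InnerProductSpace ℂ H]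
    [CompleteSpace H] (T : H →L[ℂ] H) (hTc : IsCompactOperator (⇑T))
    (hsym : ∀ x y : H, ⟪T x, y⟫_ℂ = ⟪x, T y⟫_ℂ)
    (hpos : ∀ x : H, 0 ≤ (⟪T x, x⟫_ℂ).re)
    (u : H) (hu : ‖u‖ = 1) (hupos : 0 < (⟪T u, u⟫_ℂ).re) :
    ∃ M : ℝ, 0 < M ∧ ∃ w : H, ‖w‖ = 1 ∧ T w = (M : ℂ) • w := by
  classical
  set S : Set ℝ := (fun x : H => (⟪T x, x⟫_ℂ).re) '' Metric.sphere 0 1 with hS_def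
  have humem : u ∈ Metric.sphere (0 : H) 1 := by simpa using hu
  have hne : S.Nonempty := ⟨_, u, humem, rfl⟩
  have hbdd : BddAbove S := by
    refine ⟨‖T‖, ?_⟩
    rintro r ⟨x, hx, rfl⟩
    have hx1 : ‖x‖ = 1 := by simpa using hx
    have h1 : (⟪T x, x⟫_ℂ).re ≤ ‖⟪T x, x⟫_ℂ‖ := Complex.re_le_norm _
    have h2 : ‖⟪T x, x⟫_ℂ‖ ≤ ‖T x‖ * ‖x‖ := norm_inner_le_norm _ _
    have h3 : ‖T x‖ ≤ ‖T‖ * ‖x‖ := T.le_opNorm x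
    rw [hx1] at h2 h3
    nlinarith
  set M : ℝ := sSup S with hM_def
  have hM0 : 0 < M := lt_of_lt_of_le hupos (le_csSup hbdd ⟨u, humem, rfl⟩)
  have hbound : ∀ y : H, (⟪T y, y⟫_ℂ).re ≤ M * ‖y‖ ^ 2 := by
    intro y
    rcases eq_or_ne y 0 with rfl | hy
    · simp
    · have hny : (0:ℝ) < ‖y‖ := norm_pos_iff.mpr hy
      set c : ℝ := ‖y‖⁻¹ with hc_def
      have hc : 0 < c := inv_pos.mpr hny
      have hmem : (c : ℂ) • y ∈ Metric.sphere (0 : H) 1 := by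
        simp [norm_smul, hc_def, inv_mul_cancel₀ hny.ne']
      have hle : (⟪T ((c:ℂ) • y), (c:ℂ) • y⟫_ℂ).re ≤ M := le_csSup hbdd ⟨_, hmem, rfl⟩
      have heq : ⟪T ((c:ℂ) • y), (c:ℂ) • y⟫_ℂ = ((c:ℂ)^2) * ⟪T y, y⟫_ℂ := by
        rw [T.map_smul, inner_smul_left, inner_smul_right, Complex.conj_ofReal]
        ring
      rw [heq] at hle
      have hre : (((c:ℂ)^2) * ⟪T y, y⟫_ℂ).re = c^2 * (⟪T y, y⟫_ℂ).re := by
        rw [← Complex.ofReal_pow, Complex.re_ofReal_mul]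
      rw [hre] at hle
      have hcy : c^2 * ‖y‖^2 = 1 := by
        rw [hc_def, inv_pow, inv_mul_cancel₀ (pow_ne_zero 2 hny.ne')]
      have h2 : c ^ 2 * (⟪T y, y⟫_ℂ).re * ‖y‖ ^ 2 ≤ M * ‖y‖ ^ 2 :=
        mul_le_mul_of_nonneg_right hle (sq_nonneg ‖y‖)
      have h3 : c ^ 2 * (⟪T y, y⟫_ℂ).re * ‖y‖ ^ 2 = (⟪T y, y⟫_ℂ).re := by
        rw [mul_comm (c ^ 2) _, mul_assoc, hcy, mul_one]
      linarith
  have hCS : ∀ x y : H, (⟪T x, y⟫_ℂ).re ^ 2 ≤ (⟪T x, x⟫_ℂ).re * (⟪T y, y⟫_ℂ).re := by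
    intro x y
    have key : ∀ t : ℝ, 0 ≤ (⟪T y, y⟫_ℂ).re * (t * t) + (2 * (⟪T x, y⟫_ℂ).re) * t
        + (⟪T x, x⟫_ℂ).re := by
      intro t
      have h0 := hpos (x + (t : ℂ) • y)
      have hyx : ⟪T y, x⟫_ℂ = conj ⟪T x, y⟫_ℂ := by
        rw [hsym y x, ← inner_conj_symm]
      have expand : ⟪T (x + (t : ℂ) • y), x + (t : ℂ) • y⟫_ℂ
          = ⟪T x, x⟫_ℂ + (t:ℂ) * ⟪T x, y⟫_ℂ + (t:ℂ) * conj ⟪T x, y⟫_ℂ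
            + ((t * t : ℝ) : ℂ) * ⟪T y, y⟫_ℂ := by
        rw [map_add, T.map_smul, inner_add_left, inner_add_right, inner_add_right,
          inner_smul_left, inner_smul_right, inner_smul_left, inner_smul_right, hyx]
        rw [Complex.conj_ofReal]
        push_cast
        ring
      rw [expand] at h0
      simp only [Complex.add_re, Complex.mul_re, Complex.ofReal_re, Complex.ofReal_im,
        Complex.conj_re, Complex.conj_im, Complex.re_ofReal_mul] at h0
      linarith [h0]
    have hd := discrim_le_zero key
    rw [discrim] at hd
    nlinarith [hd]
  have hTx_bound : ∀ x : H, ‖x‖ = 1 → ‖T x‖ ^ 2 ≤ M * (⟪T x, x⟫_ℂ).re := by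
    intro x hx
    have h1 := hCS x (T x)
    have h2 : (⟪T x, T x⟫_ℂ).re = ‖T x‖ ^ 2 := by
      rw [← inner_self_eq_norm_sq (𝕜 := ℂ) (T x)]
      rfl
    have h3 : (⟪T (T x), T x⟫_ℂ).re ≤ M * ‖T x‖ ^ 2 := hbound _
    rw [h2] at h1
    rcases eq_or_lt_of_le (norm_nonneg (T x)) with h0 | h0
    · have h00 : ‖T x‖ ^ 2 = 0 := by rw [← h0]; ring
      rw [h00]
      exact mul_nonneg hM0.le (hpos x)
    · have hpx := hpos x
      have hppos : 0 < ‖T x‖ ^ 2 := by positivity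
      nlinarith
  obtain ⟨r, -, hrt, hrmem⟩ := exists_seq_tendsto_sSup hne hbdd
  rw [← hM_def] at hrt
  choose x hxs hxr using hrmem
  have hxr' : ∀ n, (⟪T (x n), x n⟫_ℂ).re = r n := fun n => hxr n
  have hx1 : ∀ n, ‖x n‖ = 1 := fun n => by simpa using hxs n
  have hrleM : ∀ n, r n ≤ M := fun n => le_csSup hbdd ⟨x n, hxs n, hxr n⟩
  have hb : ∀ n, ‖T (x n) - (M : ℂ) • x n‖ ^ 2 ≤ M * (M - r n) := by
    intro n
    have hns := norm_sub_sq (𝕜 := ℂ) (T (x n)) ((M : ℂ) • x n)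
    have h1 : (⟪T (x n), (M:ℂ) • x n⟫_ℂ).re = M * r n := by
      rw [inner_smul_right, Complex.re_ofReal_mul, hxr' n]
    have h2 : ‖(M:ℂ) • x n‖ ^ 2 = M ^ 2 := by
      rw [norm_smul, hx1 n]
      simp [abs_of_pos hM0]
    have h3 := hTx_bound (x n) (hx1 n)
    rw [hxr' n] at h3
    have hre : RCLike.re ⟪T (x n), (M:ℂ) • x n⟫_ℂ = (⟪T (x n), (M:ℂ) • x n⟫_ℂ).re := rfl
    rw [hns, hre, h1, h2]
    nlinarith
  have hsq : Tendsto (fun n => ‖T (x n) - (M : ℂ) • x n‖ ^ 2) atTop (𝓝 0) := by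
    have h0 : Tendsto (fun n => M * (M - r n)) atTop (𝓝 0) := by
      have := (tendsto_const_nhds (x := M) (f := atTop (α := ℕ))).sub hrt
      have h2 := this.const_mul M
      simpa using h2
    exact squeeze_zero (fun n => by positivity) hb h0
  have hdiff : Tendsto (fun n => T (x n) - (M : ℂ) • x n) atTop (𝓝 0) := by
    rw [tendsto_zero_iff_norm_tendsto_zero]
    have hc := (Real.continuous_sqrt.tendsto 0).comp hsq
    simp only [Function.comp_def, Real.sqrt_zero] at hc
    have heq : ∀ n, Real.sqrt (‖T (x n) - (M : ℂ) • x n‖ ^ 2)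
        = ‖T (x n) - (M : ℂ) • x n‖ := fun n => Real.sqrt_sq (norm_nonneg _)
    simpa only [heq] using hc
  obtain ⟨K, hK, hKmem⟩ := hTc
  obtain ⟨ε, hε, hball⟩ := Metric.mem_nhds_iff.mp hKmem
  set c : ℝ := ε / 2 with hc_def
  have hc : 0 < c := by positivity
  have hmemK : ∀ n, (c : ℂ) • T (x n) ∈ K := by
    intro n
    have hmb : (c : ℂ) • x n ∈ Metric.ball (0 : H) ε := by
      simp only [Metric.mem_ball, dist_zero_right, norm_smul, hx1 n, mul_one,
        Complex.norm_real, Real.norm_eq_abs, abs_of_pos hc]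
      simpa [hc_def] using half_lt_self hε
    have := hball hmb
    rw [Set.mem_preimage, _root_.map_smul] at this
    exact this
  obtain ⟨z, -, φ, hφ, hzt⟩ := hK.tendsto_subseq hmemK
  have hcne : (c : ℂ) ≠ 0 := by exact_mod_cast hc.ne'
  have hMne : (M : ℂ) ≠ 0 := by exact_mod_cast hM0.ne'
  set y : H := (c : ℂ)⁻¹ • z with hy_def
  have hTx : Tendsto (fun k => T (x (φ k))) atTop (𝓝 y) := by
    have h1 := hzt.const_smul ((c : ℂ)⁻¹)
    simp only [Function.comp_def, inv_smul_smul₀ hcne] at h1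
    exact h1
  have hMx : Tendsto (fun k => (M : ℂ) • x (φ k)) atTop (𝓝 y) := by
    have hd := hdiff.comp hφ.tendsto_atTop
    have h2 := hTx.sub hd
    simp only [Function.comp_def, sub_sub_cancel, sub_zero] at h2
    exact h2
  set w : H := (M : ℂ)⁻¹ • y with hw_def
  have hxlim : Tendsto (fun k => x (φ k)) atTop (𝓝 w) := by
    have h1 := hMx.const_smul ((M : ℂ)⁻¹)
    simp only [inv_smul_smul₀ hMne] at h1
    exact h1
  have hw1 : ‖w‖ = 1 := by
    have hnorm : Tendsto (fun k => ‖x (φ k)‖) atTop (𝓝 ‖w‖) := hxlim.norm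
    have hone : Tendsto (fun k => ‖x (φ k)‖) atTop (𝓝 1) := by
      simpa [hx1] using tendsto_const_nhds (x := (1:ℝ)) (f := atTop (α := ℕ))
    exact tendsto_nhds_unique hnorm hone
  have hTw : T w = y :=
    tendsto_nhds_unique ((T.continuous.tendsto w).comp hxlim) hTx
  exact ⟨M, hM0, w, hw1, by rw [hTw, hw_def, smul_inv_smul₀ hMne]⟩

/-- An irreducible strongly continuous unitary representation of a compact
topological group on a nonzero complex Hilbert space is finite-dimensional. -/
theorem irreducible_unitary_rep_of_compact_group_is_finite_dimensional
    {G : Type*} [Group G] [TopologicalSpace G] [IsTopologicalGroup G] [CompactSpace G]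
    {H : Type*} [NormedAddCommGroup H] [InnerProductSpace ℂ H] [CompleteSpace H]
    [Nontrivial H]
    (π : G →* (H ≃ₗᵢ[ℂ] H))
    (hcont : ∀ v : H, Continuous fun g : G => π g v)
    (hirr : ∀ S : Submodule ℂ H, IsClosed (S : Set H) →
      (∀ g : G, ∀ v ∈ S, π g v ∈ S) → S = ⊥ ∨ S = ⊤) :
    FiniteDimensional ℂ H := by
  classical
  -- a unit vector
  obtain ⟨v₀, hv₀⟩ := exists_ne (0 : H)
  have hnv₀ : (0:ℝ) < ‖v₀‖ := norm_pos_iff.mpr hv₀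
  set v : H := ((‖v₀‖⁻¹ : ℝ) : ℂ) • v₀ with hv_def
  have hv : ‖v‖ = 1 := by
    simp [hv_def, norm_smul, abs_of_pos (inv_pos.mpr hnv₀), inv_mul_cancel₀ hnv₀.ne']
  -- Haar measure on G
  borelize G
  set K₀ : TopologicalSpace.PositiveCompacts G :=
    ⟨⟨Set.univ, isCompact_univ⟩, by rw [interior_univ]; exact Set.univ_nonempty⟩ with hK₀_def
  set μ : Measure G := Measure.haarMeasure K₀ with hμ_def
  haveI : IsProbabilityMeasure μ := ⟨by exact Measure.haarMeasure_self (K₀ := K₀)⟩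
  -- the orbit map
  set orb : G → H := fun g => π g v with horb_def
  have horb : Continuous orb := hcont v
  have horbnorm : ∀ g, ‖orb g‖ = 1 := fun g => by
    rw [horb_def]; simpa [LinearIsometryEquiv.norm_map] using hv
  have horb_mul : ∀ s g : G, orb (s * g) = π s (orb g) := by
    intro s g
    simp only [horb_def, map_mul, LinearIsometryEquiv.coe_mul, Function.comp_apply]
  -- the integrand
  set f : G → H →L[ℂ] H := fun g => (innerSL ℂ (orb g)).smulRight (orb g) with hf_def
  have hf_cont : Continuous f := by
    have h2 : Continuous fun p : (H →L[ℂ] ℂ) × H => p.1.smulRight p.2 :=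
      isBoundedBilinearMap_smulRight.continuous
    have h3 : Continuous fun w : H => ((innerSL ℂ w : H →L[ℂ] ℂ), w) :=
      ((innerSL ℂ).continuous).prodMk continuous_id
    exact (h2.comp h3).comp horb
  have hf_supp : HasCompactSupport f :=
    IsCompact.of_isClosed_subset isCompact_univ (isClosed_tsupport f) (Set.subset_univ _)
  have hf_int : Integrable f μ := hf_cont.integrable_of_hasCompactSupport hf_supp
  -- the averaged operator
  set T : H →L[ℂ] H := ∫ g, f g ∂μ with hT_def
  have hfx_int : ∀ x : H, Integrable (fun g => ⟪orb g, x⟫_ℂ • orb g) μ := by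
    intro x
    have := hf_int.apply_continuousLinearMap x
    simpa [hf_def] using this
  have hT_apply : ∀ x : H, T x = ∫ g, ⟪orb g, x⟫_ℂ • orb g ∂μ := by
    intro x
    rw [hT_def, ContinuousLinearMap.integral_apply hf_int x]
    simp [hf_def]
  have hinner : ∀ x y : H, ⟪x, T y⟫_ℂ = ∫ g, ⟪orb g, y⟫_ℂ * ⟪x, orb g⟫_ℂ ∂μ := by
    intro x y
    rw [hT_apply y, ← integral_inner (𝕜 := ℂ) (hfx_int y) x]
    simp [inner_smul_right]
  have hsym : ∀ x y : H, ⟪T x, y⟫_ℂ = ⟪x, T y⟫_ℂ := by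
    intro x y
    rw [← inner_conj_symm, hinner y x, ← integral_conj, hinner x y]
    refine integral_congr_ae (ae_of_all _ fun g => ?_)
    simp only [map_mul, inner_conj_symm]
    ring
  have hre : ∀ x : H, (⟪T x, x⟫_ℂ).re = ∫ g, ‖⟪x, orb g⟫_ℂ‖ ^ 2 ∂μ := by
    intro x
    rw [hsym x x, hinner x x]
    have hptwise : ∀ g, ⟪orb g, x⟫_ℂ * ⟪x, orb g⟫_ℂ = ((‖⟪x, orb g⟫_ℂ‖ ^ 2 : ℝ) : ℂ) := by
      intro g
      rw [← inner_conj_symm x (orb g), RCLike.mul_conj]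
      norm_cast
      rw [RCLike.norm_conj]
      rfl
    have hio : ∫ g, ((‖⟪x, orb g⟫_ℂ‖ ^ 2 : ℝ) : ℂ) ∂μ
        = ((∫ g, ‖⟪x, orb g⟫_ℂ‖ ^ 2 ∂μ : ℝ) : ℂ) := integral_ofReal (𝕜 := ℂ)
    rw [integral_congr_ae (ae_of_all _ hptwise), hio, Complex.ofReal_re]
  have hpos : ∀ x : H, 0 ≤ (⟪T x, x⟫_ℂ).re := by
    intro x
    rw [hre x]
    exact integral_nonneg fun g => by positivity
  have hvpos : 0 < (⟪T v, v⟫_ℂ).re := by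
    rw [hre v]
    have hqc : Continuous fun g => ‖⟪v, orb g⟫_ℂ‖ ^ 2 :=
      ((continuous_const.inner horb).norm.pow 2)
    have hqsupp : HasCompactSupport fun g => ‖⟪v, orb g⟫_ℂ‖ ^ 2 :=
      IsCompact.of_isClosed_subset isCompact_univ (isClosed_tsupport _) (Set.subset_univ _)
    refine hqc.integral_pos_of_hasCompactSupport_nonneg_nonzero hqsupp
      (fun g => by positivity) (x := (1 : G)) ?_
    have h1 : orb (1 : G) = v := by simp [horb_def, map_one]
    rw [h1, inner_self_eq_norm_sq_to_K (𝕜 := ℂ) v, hv]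
    norm_num
  -- T commutes with the representation
  have hcomm : ∀ s : G, ∀ x : H, π s (T x) = T (π s x) := by
    intro s x
    set A : H →L[ℂ] H := (π s).toLinearIsometry.toContinuousLinearMap with hA_def
    have hA_apply : ∀ y : H, A y = π s y := fun y => rfl
    calc π s (T x) = A (∫ g, ⟪orb g, x⟫_ℂ • orb g ∂μ) := by rw [← hA_apply, hT_apply]
      _ = ∫ g, A (⟪orb g, x⟫_ℂ • orb g) ∂μ := (A.integral_comp_comm (hfx_int x)).symm
      _ = ∫ g, ⟪orb (s * g), π s x⟫_ℂ • orb (s * g) ∂μ := by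
          refine integral_congr_ae (ae_of_all _ fun g => ?_)
          show A (⟪orb g, x⟫_ℂ • orb g) = ⟪orb (s * g), π s x⟫_ℂ • orb (s * g)
          rw [horb_mul s g, LinearIsometryEquiv.inner_map_map, A.map_smul, hA_apply]
      _ = ∫ g, ⟪orb g, π s x⟫_ℂ • orb g ∂μ :=
          integral_mul_left_eq_self (fun g => ⟪orb g, π s x⟫_ℂ • orb g) s
      _ = T (π s x) := (hT_apply _).symm
  -- T is a compact operator
  set Korb : Set H := Set.range orb with hKorb_def
  have hKorb : IsCompact Korb := isCompact_range horb
  set D : Set H := (fun p : ℂ × H => p.1 • p.2) '' (Metric.closedBall 0 1 ×ˢ Korb) with hD_def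
  have hD : IsCompact D :=
    ((isCompact_closedBall (0:ℂ) 1).prod hKorb).image (continuous_fst.smul continuous_snd)
  set C : Set H := closure (convexHull ℝ D) with hC_def
  have hCconv : Convex ℝ C := (convex_convexHull ℝ D).closure
  have hCcl : IsClosed C := isClosed_closure
  have hCcomp : IsCompact C :=
    TotallyBounded.isCompact_of_isClosed
      (TotallyBounded.closure (totallyBounded_convexHull.mpr hD.totallyBounded)) hCcl
  have himg : ∀ x : H, ‖x‖ ≤ 1 → T x ∈ C := by
    intro x hx
    have hmemD : ∀ g, ⟪orb g, x⟫_ℂ • orb g ∈ D := by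
      intro g
      refine ⟨(⟪orb g, x⟫_ℂ, orb g), ⟨?_, Set.mem_range_self g⟩, rfl⟩
      rw [Metric.mem_closedBall, dist_zero_right]
      calc ‖⟪orb g, x⟫_ℂ‖ ≤ ‖orb g‖ * ‖x‖ := norm_inner_le_norm _ _
        _ ≤ 1 := by rw [horbnorm g, one_mul]; exact hx
    have havg : ⨍ g, (⟪orb g, x⟫_ℂ • orb g) ∂μ ∈ C :=
      hCconv.average_mem hCcl
        (ae_of_all _ fun g => subset_closure (subset_convexHull ℝ D (hmemD g))) (hfx_int x)
    rw [hT_apply x, ← average_eq_integral]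
    exact havg
  have hTc : IsCompactOperator (⇑T) := by
    refine ⟨C, hCcomp, Filter.mem_of_superset (Metric.closedBall_mem_nhds (0:H) one_pos) ?_⟩
    intro x hx
    exact himg x (by simpa using hx)
  -- extract an eigenvector
  obtain ⟨M, hM0, wv, hwv, hTwv⟩ := aux_exists_unit_eigenvector T hTc hsym hpos v hv hvpos
  have hMne : (M : ℂ) ≠ 0 := by exact_mod_cast hM0.ne'
  -- the eigenspace is an invariant closed subspace
  set S : Submodule ℂ H := LinearMap.ker ((T - (M : ℂ) • ContinuousLinearMap.id ℂ H : H →L[ℂ] H) : H →ₗ[ℂ] H) with hSdef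
  have hS_mem : ∀ x : H, x ∈ S ↔ T x = (M : ℂ) • x := by
    intro x
    rw [hSdef, LinearMap.mem_ker]
    simp only [ContinuousLinearMap.coe_coe, ContinuousLinearMap.coe_sub', Pi.sub_apply, ContinuousLinearMap.coe_smul',
      Pi.smul_apply, ContinuousLinearMap.coe_id', id_eq]
    exact sub_eq_zero
  have hS_closed : IsClosed (S : Set H) :=
    ContinuousLinearMap.isClosed_ker (T - (M : ℂ) • ContinuousLinearMap.id ℂ H)
  have hS_inv : ∀ g : G, ∀ x ∈ S, π g x ∈ S := by
    intro g x hx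
    rw [hS_mem] at hx ⊢
    rw [← hcomm g x, hx, _root_.map_smul]
  have hS_top : S = ⊤ := by
    rcases hirr S hS_closed hS_inv with h | h
    · exfalso
      have hwS : wv ∈ S := (hS_mem wv).mpr hTwv
      rw [h, Submodule.mem_bot] at hwS
      rw [hwS] at hwv
      simp at hwv
    · exact h
  have hT_eq : ∀ x : H, T x = (M : ℂ) • x := fun x =>
    (hS_mem x).mp (hS_top ▸ Submodule.mem_top)
  -- the closed unit ball is compact, hence H is finite-dimensional
  have hball : Metric.closedBall (0 : H) 1 ⊆ (fun y : H => (M : ℂ)⁻¹ • y) '' C := by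
    intro x hx
    refine ⟨(M : ℂ) • x, ?_, inv_smul_smul₀ hMne x⟩
    rw [← hT_eq x]
    exact himg x (by simpa using hx)
  have hcomp_ball : IsCompact (Metric.closedBall (0 : H) 1) :=
    IsCompact.of_isClosed_subset (hCcomp.image (continuous_const_smul _))
      Metric.isClosed_closedBall hball
  exact FiniteDimensional.of_isCompact_closedBall₀ ℂ one_pos hcomp_ball
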